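/- Let ⟨n_i : i ∈ I⟩ be a sequence of positive natural numbers such that for infinitely many i the value n_i is equal to some fixed m with {i : n_i = m} infinite. If the sequence ⟨n_i : i ∈ I⟩ is reversible, then it is not the case that some value is attained infinitely often and equals a sum of other infinitely-attained values; more precisely: if ⟨n_i : i ∈ I⟩ is reversible then the set K = {m : |{i : n_i = m}| ≥ ω} is independent. -/

import Mathlib

/-- A sequence of (positive) natural numbers is reversible iff there is no non-injective
surjection f : I → I such that for all j, the sum of n_i over the fiber f⁻¹[{j}] equals n_j. -/
def RevSeqNat {I : Type*} (n : I → ℕ) : Prop :=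
  ¬ ∃ f : I → I, Function.Surjective f ∧ ¬ Function.Injective f ∧
      ∀ j, ∑ᶠ i ∈ f ⁻¹' {j}, n i = n j

/-- A set K of naturals is independent iff no element of K belongs to the additive
subsemigroup generated by the other elements of K. -/
def IndepSet (K : Set ℕ) : Prop :=
  ∀ m ∈ K, m ∉ AddSubsemigroup.closure (K \ {m})

/-- If ⟨n_i : i ∈ I⟩ is a reversible sequence of positive naturals (where some
value m is attained by infinitely many i), then the set K = {m : {i | n_i = m} is infinite}
is independent. -/

lemma mem_closure_list {S : Set ℕ} {x : ℕ} (hx : x ∈ AddSubsemigroup.closure S) :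
    ∃ l : List ℕ, l ≠ [] ∧ (∀ y ∈ l, y ∈ S) ∧ l.sum = x := by
  induction hx using AddSubsemigroup.closure_induction with
  | mem y hy => exact ⟨[y], by simp, by simpa, by simp⟩
  | add a b ha hb iha ihb =>
    obtain ⟨l1, h1, h1S, h1s⟩ := iha
    obtain ⟨l2, h2, h2S, h2s⟩ := ihb
    refine ⟨l1 ++ l2, by simp [h1], ?_, by simp [h1s, h2s]⟩
    intro y hy
    rcases List.mem_append.1 hy with h | h
    exacts [h1S y h, h2S y h]

theorem stmt5 {I : Type*} (n : I → ℕ) (hpos : ∀ i, 0 < n i)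
    (m : ℕ) (hm : {i | n i = m}.Infinite)
    (hrev : RevSeqNat n) :
    IndepSet {m : ℕ | {i | n i = m}.Infinite} := by
  classical
  set K := {m : ℕ | {i | n i = m}.Infinite} with hK
  intro m' hm' hcl
  obtain ⟨l, hne, hS, hsum⟩ := mem_closure_list hcl
  -- each list entry is in K and ≠ m'
  have hK' : ∀ y ∈ l, ({i | n i = y}.Infinite ∧ y ≠ m') := by
    intro y hy
    obtain ⟨h1, h2⟩ := hS y hy
    exact ⟨h1, by simpa using h2⟩
  set t := l.length with htdef
  have ht0 : 0 < t := List.length_pos_iff.2 hne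
  have ht2 : 2 ≤ t := by
    by_contra h
    have ht1 : l.length = 1 := by omega
    obtain ⟨y, rfl⟩ := List.length_eq_one_iff.1 ht1
    have := (hK' y (by simp)).2
    simp at hsum
    exact this hsum
  -- the default element
  obtain ⟨i₀, -⟩ := hm.nonempty
  -- generic picker
  set g : ℕ → ℕ → I := fun y k =>
    if h : {i | n i = y}.Infinite then (Set.Infinite.natEmbedding _ h k : I) else i₀ with hgdef
  have hgval : ∀ y k, {i | n i = y}.Infinite → n (g y k) = y := by
    intro y k h
    simp only [hgdef, dif_pos h]
    exact (Set.Infinite.natEmbedding _ h k).2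
  have hginj : ∀ y, {i | n i = y}.Infinite → ∀ k k', g y k = g y k' → k = k' := by
    intro y h k k' he
    simp only [hgdef, dif_pos h] at he
    exact (Set.Infinite.natEmbedding _ h).injective (Subtype.val_injective he)

  have hm'inf : {i | n i = m'}.Infinite := hm'
  -- values
  set v : Fin t → ℕ := fun s => l.get (Fin.cast htdef s) with hvdef
  have hvmem : ∀ s : Fin t, v s ∈ l := fun s =>
    l.get_mem (Fin.cast htdef s)
  have hvK : ∀ s, {i | n i = v s}.Infinite := fun s => (hK' _ (hvmem s)).1
  have hvne : ∀ s, v s ≠ m' := fun s => (hK' _ (hvmem s)).2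
  have hvsum : ∑ s : Fin t, v s = m' := by
    have : ∑ s : Fin t, v s = ∑ i : Fin l.length, l[i.1] :=
      Fintype.sum_equiv (finCongr htdef) _ _ (fun s => rfl)
    rw [this, Fin.sum_univ_getElem, hsum]
  -- index choices
  set ea : ℕ → I := fun p => g m' p with headef
  set b : ℕ → Fin t → I := fun p s => g (v s) (p * t + s.1) with hbdef
  have hna : ∀ p, n (ea p) = m' := fun p => hgval _ _ hm'inf
  have hnb : ∀ p s, n (b p s) = v s := fun p s => hgval _ _ (hvK s)
  have eainj : Function.Injective ea := fun p q h => hginj _ hm'inf _ _ h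
  have hab : ∀ p q s, ea p ≠ b q s := by
    intro p q s h
    exact hvne s (by rw [← hnb q s, ← h, hna])
  have binj : ∀ p s p' s', b p s = b p' s' → p = p' ∧ s = s' := by
    intro p s p' s' h
    have hv' : v s = v s' := by rw [← hnb p s, h, hnb]
    rw [hbdef] at h
    simp only [hv'] at h
    have hk : p * t + s.1 = p' * t + s'.1 := hginj _ (hvK s') _ _ h
    have hs : s.1 = s'.1 := by
      have h1 : (p * t + s.1) % t = (p' * t + s'.1) % t := by rw [hk]
      rwa [Nat.add_comm, Nat.add_mul_mod_self_right, Nat.mod_eq_of_lt s.isLt,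
        Nat.add_comm, Nat.add_mul_mod_self_right, Nat.mod_eq_of_lt s'.isLt] at h1
    refine ⟨?_, Fin.ext hs⟩
    have : p * t = p' * t := by omega
    exact Nat.eq_of_mul_eq_mul_right ht0 this
  -- the map
  set f : I → I := fun i =>
    if h : ∃ p, ea p = i then ea (h.choose + 1)
    else if h2 : ∃ ps : ℕ × Fin t, b ps.1 ps.2 = i then
      (if h2.choose.1 = 0 then ea 0 else b (h2.choose.1 - 1) h2.choose.2)
    else i with hfdef
  have hfa : ∀ p, f (ea p) = ea (p + 1) := by
    intro p
    have h : ∃ q, ea q = ea p := ⟨p, rfl⟩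
    rw [hfdef]
    simp only [dif_pos h]
    rw [eainj h.choose_spec]
  have hfb : ∀ p s, f (b p s) = if p = 0 then ea 0 else b (p - 1) s := by
    intro p s
    have h1 : ¬ ∃ q, ea q = b p s := by rintro ⟨q, hq⟩; exact hab q p s hq
    have h2 : ∃ ps : ℕ × Fin t, b ps.1 ps.2 = b p s := ⟨(p, s), rfl⟩
    rw [hfdef]
    simp only [dif_neg h1, dif_pos h2]
    obtain ⟨hp, hs⟩ := binj _ _ _ _ h2.choose_spec
    rw [hp, hs]
  have hfo : ∀ i, (¬ ∃ p, ea p = i) → (¬ ∃ ps : ℕ × Fin t, b ps.1 ps.2 = i) → f i = i := by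
    intro i h1 h2
    rw [hfdef]
    simp only [dif_neg h1, dif_neg h2]
  apply hrev
  refine ⟨f, ?_, ?_, ?_⟩
  · -- surjective
    intro j
    by_cases h1 : ∃ p, ea p = j
    · obtain ⟨p, rfl⟩ := h1
      cases p with
      | zero => exact ⟨b 0 ⟨0, by omega⟩, by rw [hfb]; simp⟩
      | succ q => exact ⟨ea q, hfa q⟩
    · by_cases h2 : ∃ ps : ℕ × Fin t, b ps.1 ps.2 = j
      · obtain ⟨⟨p, s⟩, rfl⟩ := h2
        exact ⟨b (p + 1) s, by rw [hfb]; simp⟩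
      · exact ⟨j, hfo j h1 h2⟩
  · -- not injective
    intro hinj
    have h01 : f (b 0 ⟨0, by omega⟩) = f (b 0 ⟨1, by omega⟩) := by
      rw [hfb, hfb]; simp
    have := binj _ _ _ _ (hinj h01)
    simp [Fin.ext_iff] at this
  · -- fiber sums
    intro j
    by_cases h1 : ∃ p, ea p = j
    · obtain ⟨p, rfl⟩ := h1
      cases p with
      | zero =>
        have hfib : f ⁻¹' {ea 0} = Set.range (fun s => b 0 s) := by
          ext i
          simp only [Set.mem_preimage, Set.mem_singleton_iff, Set.mem_range]
          constructor
          · intro hi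
            by_cases h1 : ∃ p, ea p = i
            · obtain ⟨q, rfl⟩ := h1
              rw [hfa] at hi
              exact absurd (eainj hi) (by omega)
            · by_cases h2 : ∃ ps : ℕ × Fin t, b ps.1 ps.2 = i
              · obtain ⟨⟨q, s⟩, rfl⟩ := h2
                rw [hfb] at hi
                rcases Nat.eq_zero_or_pos q with rfl | hq
                · exact ⟨s, rfl⟩
                · rw [if_neg (by omega)] at hi
                  exact absurd hi.symm (hab _ _ _)
              · rw [hfo i h1 h2] at hi
                exact absurd ⟨0, hi.symm⟩ h1
          · rintro ⟨s, rfl⟩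
            rw [hfb]; simp
        rw [hfib, finsum_mem_range, finsum_eq_sum_of_fintype]
        · rw [hna]
          calc ∑ s : Fin t, n (b 0 s) = ∑ s : Fin t, v s := by
                simp only [hnb]
            _ = m' := hvsum
        · intro s s' h
          exact (binj _ _ _ _ h).2
      | succ p =>
        have hfib : f ⁻¹' {ea (p + 1)} = {ea p} := by
          ext i
          simp only [Set.mem_preimage, Set.mem_singleton_iff]
          constructor
          · intro hi
            by_cases h1 : ∃ q, ea q = i
            · obtain ⟨q, rfl⟩ := h1
              rw [hfa] at hi
              obtain rfl : q = p := by have := eainj hi; omega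
              rfl
            · by_cases h2 : ∃ ps : ℕ × Fin t, b ps.1 ps.2 = i
              · obtain ⟨⟨q, s⟩, rfl⟩ := h2
                rw [hfb] at hi
                rcases Nat.eq_zero_or_pos q with rfl | hq
                · rw [if_pos rfl] at hi
                  exact absurd (eainj hi) (by omega)
                · rw [if_neg (by omega)] at hi
                  exact absurd hi.symm (hab _ _ _)
              · rw [hfo i h1 h2] at hi
                exact absurd ⟨p + 1, hi.symm⟩ h1
          · rintro rfl
            exact hfa p
        rw [hfib, finsum_mem_singleton, hna, hna]
    · by_cases h2 : ∃ ps : ℕ × Fin t, b ps.1 ps.2 = j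
      · obtain ⟨⟨p, s⟩, rfl⟩ := h2
        have hfib : f ⁻¹' {b p s} = {b (p + 1) s} := by
          ext i
          simp only [Set.mem_preimage, Set.mem_singleton_iff]
          constructor
          · intro hi
            by_cases h1' : ∃ q, ea q = i
            · obtain ⟨q, rfl⟩ := h1'
              rw [hfa] at hi
              exact absurd hi (hab _ _ _)
            · by_cases h2' : ∃ ps : ℕ × Fin t, b ps.1 ps.2 = i
              · obtain ⟨⟨q, s'⟩, rfl⟩ := h2'
                rw [hfb] at hi
                rcases Nat.eq_zero_or_pos q with rfl | hq
                · rw [if_pos rfl] at hi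
                  exact absurd hi ((hab _ _ _))
                · rw [if_neg (by omega)] at hi
                  obtain ⟨hq', hs'⟩ := binj _ _ _ _ hi
                  subst hs'
                  congr 1
                  omega
              · rw [hfo i h1' h2'] at hi
                exact absurd ⟨(p, s), hi.symm⟩ h2'
          · rintro rfl
            rw [hfb]; simp
        rw [hfib, finsum_mem_singleton, hnb, hnb]
      · have hfib : f ⁻¹' {j} = {j} := by
          ext i
          simp only [Set.mem_preimage, Set.mem_singleton_iff]
          constructor
          · intro hi
            by_cases h1' : ∃ q, ea q = i
            · obtain ⟨q, rfl⟩ := h1'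
              rw [hfa] at hi
              exact absurd ⟨q + 1, hi⟩ h1
            · by_cases h2' : ∃ ps : ℕ × Fin t, b ps.1 ps.2 = i
              · obtain ⟨⟨q, s⟩, rfl⟩ := h2'
                rw [hfb] at hi
                rcases Nat.eq_zero_or_pos q with rfl | hq
                · rw [if_pos rfl] at hi
                  exact absurd ⟨0, hi⟩ h1
                · rw [if_neg (by omega)] at hi
                  exact absurd ⟨(q - 1, s), hi⟩ h2
              · rw [hfo i h1' h2'] at hi
                exact hi
          · rintro rfl
            exact hfo _ h1 h2
        rw [hfib, finsum_mem_singleton]
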